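/- arXiv:2111.13768 — 3 statements merged into one kernel-verified Lean document; each statement's English description precedes it below -/
import Mathlib

section
/- Let 𝒢 be a groupoid whose set of objects 𝒢₀ is finite and let A = ⊕_{g∈𝒢} A_g be a 𝒢-graded algebra over a field k. Then for every object e ∈ 𝒢₀ the subalgebra A_e has an identity element 1_e, and the identity of A decomposes as 1_A = Σ_{e∈𝒢₀} 1_e. -/
open scoped Classical

noncomputable section

universe u v w

/-- A groupoid, presented as a set of morphisms with partially defined
composition.  `s g` is the domain (source) identity `d(g)`, `t g` the range
(target) identity `r(g)`; `mul g h` is the composite `gh`, meaningful when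
`s g = t h`. -/
structure Gpd (G : Type u) where
  s : G → G
  t : G → G
  inv : G → G
  mul : G → G → G
  s_s : ∀ g, s (s g) = s g
  t_s : ∀ g, t (s g) = s g
  s_t : ∀ g, s (t g) = t g
  t_t : ∀ g, t (t g) = t g
  s_mul : ∀ g h, s g = t h → s (mul g h) = s h
  t_mul : ∀ g h, s g = t h → t (mul g h) = t g
  mul_assoc : ∀ g h l, s g = t h → s h = t l → mul (mul g h) l = mul g (mul h l)
  mul_src : ∀ g, mul g (s g) = g
  tgt_mul : ∀ g, mul (t g) g = g
  s_inv : ∀ g, s (inv g) = t g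
  t_inv : ∀ g, t (inv g) = s g
  inv_mul : ∀ g, mul (inv g) g = s g
  mul_inv : ∀ g, mul g (inv g) = t g

namespace Gpd

variable {G : Type u}

/-- `e` is an object (identity) of the groupoid. -/
def obj (𝒢 : Gpd G) (e : G) : Prop := 𝒢.s e = e

/-- The set `𝒢₀` of objects of the groupoid. -/
def Objs (𝒢 : Gpd G) : Set G := {e | 𝒢.obj e}

end Gpd

/-- An action `α = (X_g, α_g)` of a groupoid `𝒢` on a set `X`:
`car g` is the subset `X_g` and `act g` restricts to the bijection
`α_g : X_{g⁻¹} → X_g`. -/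
structure GpdSetAction {G : Type u} (𝒢 : Gpd G) (X : Type v) where
  car : G → Set X
  act : G → X → X
  car_t : ∀ g, car g = car (𝒢.t g)
  bijOn : ∀ g, Set.BijOn (act g) (car (𝒢.inv g)) (car g)
  act_id : ∀ e, 𝒢.obj e → ∀ x ∈ car e, act e x = x
  act_mul : ∀ g h, 𝒢.s g = 𝒢.t h → ∀ x ∈ car (𝒢.inv h),
    act g (act h x) = act (𝒢.mul g h) x

/-- `X` is a split `𝒢`-set: `X` is the disjoint union of the `X_e`, `e ∈ 𝒢₀`. -/
def GpdSetAction.Split {G : Type u} {𝒢 : Gpd G} {X : Type v} (α : GpdSetAction 𝒢 X) : Prop :=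
  ∀ x : X, ∃! e : G, 𝒢.obj e ∧ x ∈ α.car e

/-- The action is fully faithful: if `α_g` fixes some `x ∈ X_g ∩ X_{g⁻¹}`
then `g` is an identity. -/
def GpdSetAction.FullyFaithful {G : Type u} {𝒢 : Gpd G} {X : Type v}
    (α : GpdSetAction 𝒢 X) : Prop :=
  ∀ g x, x ∈ α.car g ∩ α.car (𝒢.inv g) → α.act g x = x → 𝒢.obj g

/-- A `𝒢`-grading of the `k`-algebra `A`:  `A = ⊕_{g ∈ 𝒢} A_g` with
`A_g A_h ⊆ A_{gh}` for composable `g, h` and `A_g A_h = 0` otherwise. -/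
structure GpdGrading {G : Type u} (𝒢 : Gpd G) (k : Type v) (A : Type w)
    [Field k] [Ring A] [Algebra k A] where
  comp : G → Submodule k A
  internal : DirectSum.IsInternal comp
  mul_mem : ∀ g h, 𝒢.s g = 𝒢.t h → ∀ a ∈ comp g, ∀ b ∈ comp h, a * b ∈ comp (𝒢.mul g h)
  mul_eq_zero : ∀ g h, 𝒢.s g ≠ 𝒢.t h → ∀ a ∈ comp g, ∀ b ∈ comp h, a * b = 0

/-- The homogeneous component of degree `g` of `a ∈ A`. -/
noncomputable def GpdGrading.proj {G : Type u} {𝒢 : Gpd G} {k : Type v} {A : Type w}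
    [Field k] [Ring A] [Algebra k A] (𝒜 : GpdGrading 𝒢 k A) (g : G) (a : A) : A :=
  ((Equiv.ofBijective _ 𝒜.internal).symm a g : A)

/-- `one : G → A` is a family of local units for the grading: each `one e`
(`e ∈ 𝒢₀`) is an identity element of `A_e` and `1_A = Σ_{e ∈ 𝒢₀} 1_e`. -/
def IsIdFamily {G : Type u} {𝒢 : Gpd G} {k : Type v} {A : Type w}
    [Field k] [Ring A] [Algebra k A] (𝒜 : GpdGrading 𝒢 k A) (one : G → A) : Prop :=
  (∀ e, 𝒢.obj e → one e ∈ 𝒜.comp e ∧ ∀ a ∈ 𝒜.comp e, one e * a = a ∧ a * one e = a) ∧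
  (1 : A) = ∑ᶠ e ∈ 𝒢.Objs, one e

/-- The multiplication of the smash product `A #_α^𝒢 X`, defined on the
ambient space of formal sums `Σ a_{(g,x)} δ_{(g,x)}`:
`(a δ_{(g,x)}) (b δ_{(h,y)}) = (a b) δ_{(gh, y)}` when `d(g) = r(h)` and
`α_h(y) = x`, and `0` otherwise. -/
noncomputable def smashMul {G : Type u} {𝒢 : Gpd G} {X : Type v} {A : Type w} [Ring A]
    (α : GpdSetAction 𝒢 X) (f₁ f₂ : (G × X) →₀ A) : (G × X) →₀ A :=
  f₁.sum fun p a => f₂.sum fun q b =>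
    if 𝒢.s p.1 = 𝒢.t q.1 ∧ α.act q.1 q.2 = p.2
    then Finsupp.single (𝒢.mul p.1 q.1, q.2) (a * b) else 0

/-- The underlying set of the smash product `A #_α^𝒢 X = ⊕_{g} ⊕_{x ∈ X_{d(g)}} A_g δ_x`:
those formal sums whose `(g,x)`-coefficient lies in `A_g`, supported on pairs
with `x ∈ X_{d(g)}`. -/
def smashSet {G : Type u} {𝒢 : Gpd G} {X : Type v} {k : Type*} {A : Type w}
    [Field k] [Ring A] [Algebra k A]
    (α : GpdSetAction 𝒢 X) (𝒜 : GpdGrading 𝒢 k A) : Set ((G × X) →₀ A) :=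
  {f | ∀ p : G × X, f p ∈ 𝒜.comp p.1 ∧ (f p ≠ 0 → p.2 ∈ α.car (𝒢.s p.1))}

/-- The identity element `Σ_{e ∈ 𝒢₀} Σ_{x ∈ X_e} 1_e δ_x` of the smash product. -/
noncomputable def smashOne {G : Type u} {𝒢 : Gpd G} {X : Type v} {A : Type w} [Ring A]
    (α : GpdSetAction 𝒢 X) (one : G → A) : (G × X) →₀ A :=
  ∑ᶠ e ∈ 𝒢.Objs, ∑ᶠ x ∈ α.car e, Finsupp.single ((e, x) : G × X) (one e)

section Aux
variable {G : Type u} {k : Type v} {A : Type w} [Field k] [Ring A] [Algebra k A]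

private lemma aux_sum_of_eval (comp : G → Submodule k A) (S : Finset G) (ι : G → G)
    (c : G → A) (hc : ∀ g, c g ∈ comp (ι g)) (h : G) :
    (((∑ g ∈ S, DirectSum.of (fun g => comp g) (ι g) ⟨c g, hc g⟩) h : comp h) : A)
      = ∑ g ∈ S, if ι g = h then c g else 0 := by
  rw [DFinsupp.finset_sum_apply, AddSubmonoidClass.coe_finset_sum]
  refine Finset.sum_congr rfl fun g _ => ?_
  by_cases hg : ι g = h
  · subst hg; rw [DirectSum.of_eq_same, if_pos rfl]
  · rw [DirectSum.of_eq_of_ne _ _ _ (Ne.symm hg), if_neg hg]; rfl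

private lemma aux_key (𝒢 : Gpd G) (𝒜 : GpdGrading 𝒢 k A)
    (S : Finset G) (one : G → A) (hmem : ∀ g, one g ∈ 𝒜.comp g)
    (hz : ∀ g ∉ S, one g = 0) (h1 : (1 : A) = ∑ g ∈ S, one g)
    {h : G} {a : A} (ha : a ∈ 𝒜.comp h) :
    a * one (𝒢.s h) = a ∧ one (𝒢.t h) * a = a := by
  constructor
  · -- right unit
    have hc : ∀ g, a * one g ∈ 𝒜.comp (𝒢.mul h g) := by
      intro g
      by_cases hg : 𝒢.s h = 𝒢.t g
      · exact 𝒜.mul_mem h g hg a ha (one g) (hmem g)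
      · rw [𝒜.mul_eq_zero h g hg a ha (one g) (hmem g)]; exact zero_mem _
    have hEq : (∑ g ∈ S, DirectSum.of (fun g => 𝒜.comp g) (𝒢.mul h g) ⟨a * one g, hc g⟩)
        = DirectSum.of (fun g => 𝒜.comp g) h ⟨a, ha⟩ := by
      apply 𝒜.internal.injective
      rw [map_sum, DirectSum.coeAddMonoidHom_of]
      simp only [DirectSum.coeAddMonoidHom_of]
      rw [← Finset.mul_sum, ← h1, mul_one]
    have e1 : ∑ g ∈ S, (if 𝒢.mul h g = h then a * one g else 0) = a := by
      have e0 := congrArg (fun y : DirectSum G fun g => (𝒜.comp g : Submodule k A) =>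
        ((y h : 𝒜.comp h) : A)) hEq
      simp only at e0
      rwa [aux_sum_of_eval, show (((DirectSum.of (fun g => 𝒜.comp g) h ⟨a, ha⟩) h : 𝒜.comp h) : A)
        = a from by rw [DirectSum.of_eq_same]] at e0
    have e2 : ∀ g ∈ S, (if 𝒢.mul h g = h then a * one g else 0)
        = (if g = 𝒢.s h then a * one g else 0) := by
      intro g _
      by_cases hcomp : 𝒢.s h = 𝒢.t g
      · by_cases hgh : g = 𝒢.s h
        · rw [if_pos hgh, if_pos (by rw [hgh]; exact 𝒢.mul_src h)]
        · rw [if_neg hgh, if_neg]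
          intro hmul
          refine hgh ?_
          calc g = 𝒢.mul (𝒢.t g) g := (𝒢.tgt_mul g).symm
            _ = 𝒢.mul (𝒢.mul (𝒢.inv h) h) g := by rw [𝒢.inv_mul h, hcomp]
            _ = 𝒢.mul (𝒢.inv h) (𝒢.mul h g) := 𝒢.mul_assoc _ _ _ (𝒢.s_inv h) hcomp
            _ = 𝒢.mul (𝒢.inv h) h := by rw [hmul]
            _ = 𝒢.s h := 𝒢.inv_mul h
      · rw [𝒜.mul_eq_zero h g hcomp a ha (one g) (hmem g)]
        simp
    rw [Finset.sum_congr rfl e2, Finset.sum_ite_eq'] at e1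
    by_cases hs : 𝒢.s h ∈ S
    · rwa [if_pos hs] at e1
    · rw [if_neg hs] at e1
      rw [hz _ hs, mul_zero, ← e1]
  · -- left unit
    have hc : ∀ g, one g * a ∈ 𝒜.comp (𝒢.mul g h) := by
      intro g
      by_cases hg : 𝒢.s g = 𝒢.t h
      · exact 𝒜.mul_mem g h hg (one g) (hmem g) a ha
      · rw [𝒜.mul_eq_zero g h hg (one g) (hmem g) a ha]; exact zero_mem _
    have hEq : (∑ g ∈ S, DirectSum.of (fun g => 𝒜.comp g) (𝒢.mul g h) ⟨one g * a, hc g⟩)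
        = DirectSum.of (fun g => 𝒜.comp g) h ⟨a, ha⟩ := by
      apply 𝒜.internal.injective
      rw [map_sum, DirectSum.coeAddMonoidHom_of]
      simp only [DirectSum.coeAddMonoidHom_of]
      rw [← Finset.sum_mul, ← h1, one_mul]
    have e1 : ∑ g ∈ S, (if 𝒢.mul g h = h then one g * a else 0) = a := by
      have e0 := congrArg (fun y : DirectSum G fun g => (𝒜.comp g : Submodule k A) =>
        ((y h : 𝒜.comp h) : A)) hEq
      simp only at e0
      rwa [aux_sum_of_eval, show (((DirectSum.of (fun g => 𝒜.comp g) h ⟨a, ha⟩) h : 𝒜.comp h) : A)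
        = a from by rw [DirectSum.of_eq_same]] at e0
    have e2 : ∀ g ∈ S, (if 𝒢.mul g h = h then one g * a else 0)
        = (if g = 𝒢.t h then one g * a else 0) := by
      intro g _
      by_cases hcomp : 𝒢.s g = 𝒢.t h
      · by_cases hgh : g = 𝒢.t h
        · rw [if_pos hgh, if_pos (by rw [hgh]; exact 𝒢.tgt_mul h)]
        · rw [if_neg hgh, if_neg]
          intro hmul
          refine hgh ?_
          calc g = 𝒢.mul g (𝒢.s g) := (𝒢.mul_src g).symm
            _ = 𝒢.mul g (𝒢.mul h (𝒢.inv h)) := by rw [𝒢.mul_inv h, ← hcomp]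
            _ = 𝒢.mul (𝒢.mul g h) (𝒢.inv h) :=
                (𝒢.mul_assoc g h (𝒢.inv h) hcomp (𝒢.t_inv h).symm).symm
            _ = 𝒢.mul h (𝒢.inv h) := by rw [hmul]
            _ = 𝒢.t h := 𝒢.mul_inv h
      · rw [𝒜.mul_eq_zero g h hcomp (one g) (hmem g) a ha]
        simp
    rw [Finset.sum_congr rfl e2, Finset.sum_ite_eq'] at e1
    by_cases hs : 𝒢.t h ∈ S
    · rwa [if_pos hs] at e1
    · rw [if_neg hs] at e1
      rw [hz _ hs, zero_mul, ← e1]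

end Aux

/-- If `𝒢` is a groupoid with finitely many objects and
`A` is a `𝒢`-graded algebra over a field `k`, then every component `A_e`
(`e ∈ 𝒢₀`) has an identity element `1_e`, and `1_A = Σ_{e ∈ 𝒢₀} 1_e`. -/
theorem graded_algebra_local_units
    {G : Type u} (𝒢 : Gpd G) (k : Type v) (A : Type w)
    [Field k] [Ring A] [Algebra k A]
    (hG₀ : 𝒢.Objs.Finite) (𝒜 : GpdGrading 𝒢 k A) :
    ∃ one : G → A,
      (∀ e, 𝒢.obj e → one e ∈ 𝒜.comp e ∧
        ∀ a ∈ 𝒜.comp e, one e * a = a ∧ a * one e = a) ∧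
      (1 : A) = ∑ᶠ e ∈ 𝒢.Objs, one e := by
  classical
  obtain ⟨x1, hx1⟩ := 𝒜.internal.surjective 1
  set S : Finset G := DFinsupp.support x1 with hS
  set one : G → A := fun g => (x1 g : A) with hone
  have hmem : ∀ g, one g ∈ 𝒜.comp g := fun g => (x1 g).2
  have hz : ∀ g ∉ S, one g = 0 := by
    intro g hg
    have h0 := DFinsupp.notMem_support_iff.mp hg
    simp [hone, h0]
  have h1 : (1 : A) = ∑ g ∈ S, one g := by
    conv_lhs => rw [← hx1, ← DirectSum.sum_support_of x1]
    rw [map_sum]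
    refine Finset.sum_congr rfl fun g _ => ?_
    rw [DirectSum.coeAddMonoidHom_of]
  refine ⟨one, ?_, ?_⟩
  · intro e he
    have he' : 𝒢.s e = e := he
    have hte : 𝒢.t e = e := by
      conv_lhs => rw [← he']
      exact (𝒢.t_s e).trans he'
    refine ⟨hmem e, fun a ha => ?_⟩
    have key := aux_key 𝒢 𝒜 S one hmem hz h1 ha
    constructor
    · rw [← hte]; exact key.2
    · conv_lhs => rw [← he']
      exact key.1
  · have hT : ∑ᶠ e ∈ 𝒢.Objs, one e = ∑ e ∈ hG₀.toFinset, one e := by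
      exact finsum_mem_eq_finite_toFinset_sum one hG₀
    rw [hT]
    set r := ∑ e ∈ hG₀.toFinset, one e with hr
    have hgr : ∀ g ∈ S, one g * r = one g := by
      intro g _
      rw [hr, Finset.mul_sum]
      have hterm : ∀ e ∈ hG₀.toFinset, one g * one e = if e = 𝒢.s g then one g else 0 := by
        intro e he
        rw [Set.Finite.mem_toFinset] at he
        have he' : 𝒢.s e = e := he
        by_cases heg : e = 𝒢.s g
        · rw [if_pos heg, heg]
          exact (aux_key 𝒢 𝒜 S one hmem hz h1 (hmem g)).1
        · rw [if_neg heg]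
          refine 𝒜.mul_eq_zero g e ?_ (one g) (hmem g) (one e) (hmem e)
          have hte : 𝒢.t e = e := by
            conv_lhs => rw [← he']
            exact (𝒢.t_s e).trans he'
          rw [hte]
          exact fun hh => heg hh.symm
      rw [Finset.sum_congr rfl hterm, Finset.sum_ite_eq']
      rw [if_pos]
      rw [Set.Finite.mem_toFinset]
      exact 𝒢.s_s g
    calc (1 : A) = ∑ g ∈ S, one g := h1
      _ = ∑ g ∈ S, one g * r := (Finset.sum_congr rfl fun g hg => (hgr g hg).symm)
      _ = (∑ g ∈ S, one g) * r := (Finset.sum_mul _ _ _).symm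
      _ = 1 * r := by rw [← h1]
      _ = r := one_mul r

end
end

section
/- Let 𝒢 be a groupoid with 𝒢₀ finite, A a unital 𝒢-graded algebra over a field k, and X a finite split 𝒢-set via α=(X_g,α_g)_{g∈𝒢}. Then the smash product A #_α^𝒢 X = ⊕_{g∈𝒢} ⊕_{x∈X_{d(g)}} A_g δ_x, with multiplication induced by (a_g δ_x)(b_h δ_y) = a_g b_h δ_y if d(g)=r(h) and α_h(y)=x, and 0 otherwise, is an associative unital algebra with identity element 1 = Σ_{e∈𝒢₀} Σ_{x∈X_e} 1_e δ_x; moreover the elements {1_e δ_x : e ∈ 𝒢₀, x ∈ X_e} form a set of pairwise orthogonal idempotents. -/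
open scoped Classical

noncomputable section

universe u v w

section Aux

variable {G : Type u} {𝒢 : Gpd G} {X : Type v} {k : Type*} {A : Type w}
  [Field k] [Ring A] [Algebra k A]

lemma Gpd.t_obj {e : G} (he : 𝒢.obj e) : 𝒢.t e = e := by
  conv_lhs => rw [← he]
  rw [𝒢.t_s, he]

/-- Product of two single elements. -/
lemma smashMul_single_single (α : GpdSetAction 𝒢 X) (p q : G × X) (a b : A) :
    smashMul α (Finsupp.single p a) (Finsupp.single q b) =
      if 𝒢.s p.1 = 𝒢.t q.1 ∧ α.act q.1 q.2 = p.2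
      then Finsupp.single ((𝒢.mul p.1 q.1, q.2) : G × X) (a * b) else 0 := by
  unfold smashMul
  rw [Finsupp.sum_single_index, Finsupp.sum_single_index]
  · simp
  · simp

lemma smashMul_zero_left (α : GpdSetAction 𝒢 X) (f : (G × X) →₀ A) :
    smashMul α 0 f = 0 := by
  unfold smashMul; exact Finsupp.sum_zero_index

lemma smashMul_zero_right (α : GpdSetAction 𝒢 X) (f : (G × X) →₀ A) :
    smashMul α f 0 = 0 := by
  unfold smashMul
  simp [Finsupp.sum_zero_index]

lemma smashMul_add_left (α : GpdSetAction 𝒢 X) (f₁ f₂ g : (G × X) →₀ A) :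
    smashMul α (f₁ + f₂) g = smashMul α f₁ g + smashMul α f₂ g := by
  unfold smashMul
  rw [Finsupp.sum_add_index']
  · intro p; simp
  · intro p a₁ a₂
    rw [← Finsupp.sum_add]
    congr 1; ext q b
    by_cases h : 𝒢.s p.1 = 𝒢.t q.1 ∧ α.act q.1 q.2 = p.2 <;>
      simp [h, add_mul, Finsupp.single_add]

lemma smashMul_add_right (α : GpdSetAction 𝒢 X) (f g₁ g₂ : (G × X) →₀ A) :
    smashMul α f (g₁ + g₂) = smashMul α f g₁ + smashMul α f g₂ := by
  unfold smashMul
  rw [← Finsupp.sum_add]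
  apply Finsupp.sum_congr; intro p _
  rw [Finsupp.sum_add_index']
  · intro q; simp
  · intro q b₁ b₂
    by_cases h : 𝒢.s p.1 = 𝒢.t q.1 ∧ α.act q.1 q.2 = p.2 <;>
      simp [h, mul_add, Finsupp.single_add]

lemma smashMul_sum_left {ι : Type*} (α : GpdSetAction 𝒢 X) (s : Finset ι)
    (g : ι → (G × X) →₀ A) (f : (G × X) →₀ A) :
    smashMul α (∑ i ∈ s, g i) f = ∑ i ∈ s, smashMul α (g i) f := by
  classical
  induction s using Finset.induction with
  | empty => simp [smashMul_zero_left]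
  | insert _ _ hi ih => simp [Finset.sum_insert hi, smashMul_add_left, ih]

lemma smashMul_sum_right {ι : Type*} (α : GpdSetAction 𝒢 X) (s : Finset ι)
    (g : ι → (G × X) →₀ A) (f : (G × X) →₀ A) :
    smashMul α f (∑ i ∈ s, g i) = ∑ i ∈ s, smashMul α f (g i) := by
  classical
  induction s using Finset.induction with
  | empty => simp [smashMul_zero_right]
  | insert _ _ hi ih => simp [Finset.sum_insert hi, smashMul_add_right, ih]

lemma smashMul_smul_left (α : GpdSetAction 𝒢 X) (c : k) (f g : (G × X) →₀ A) :
    smashMul α (c • f) g = c • smashMul α f g := by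
  unfold smashMul
  rw [Finsupp.sum_smul_index', Finsupp.smul_sum]
  · apply Finsupp.sum_congr; intro p _
    rw [Finsupp.smul_sum]
    apply Finsupp.sum_congr; intro q _
    by_cases h : 𝒢.s p.1 = 𝒢.t q.1 ∧ α.act q.1 q.2 = p.2
    · rw [if_pos h, if_pos h, Finsupp.smul_single, smul_mul_assoc]
    · rw [if_neg h, if_neg h, smul_zero]
  · intro p; simp

lemma smashMul_smul_right (α : GpdSetAction 𝒢 X) (c : k) (f g : (G × X) →₀ A) :
    smashMul α f (c • g) = c • smashMul α f g := by
  unfold smashMul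
  rw [Finsupp.smul_sum]
  apply Finsupp.sum_congr; intro p _
  rw [Finsupp.sum_smul_index', Finsupp.smul_sum]
  · apply Finsupp.sum_congr; intro q _
    by_cases h : 𝒢.s p.1 = 𝒢.t q.1 ∧ α.act q.1 q.2 = p.2
    · rw [if_pos h, if_pos h, Finsupp.smul_single, mul_smul_comm]
    · rw [if_neg h, if_neg h, smul_zero]
  · intro q; simp

end Aux

section Aux2

variable {G : Type u} {𝒢 : Gpd G} {X : Type v} {k : Type*} {A : Type w}
  [Field k] [Ring A] [Algebra k A]
variable {α : GpdSetAction 𝒢 X} {𝒜 : GpdGrading 𝒢 k A}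

lemma smashSet_zero : (0 : (G × X) →₀ A) ∈ smashSet α 𝒜 := by
  intro p; simp [Submodule.zero_mem]

lemma smashSet_add {f g : (G × X) →₀ A} (hf : f ∈ smashSet α 𝒜) (hg : g ∈ smashSet α 𝒜) :
    f + g ∈ smashSet α 𝒜 := by
  intro p
  refine ⟨Submodule.add_mem _ (hf p).1 (hg p).1, fun hne => ?_⟩
  by_cases h : f p = 0
  · exact (hg p).2 (by simpa [h] using hne)
  · exact (hf p).2 h

lemma smashSet_sum {ι : Type*} (s : Finset ι) (g : ι → (G × X) →₀ A)
    (hg : ∀ i ∈ s, g i ∈ smashSet α 𝒜) : (∑ i ∈ s, g i) ∈ smashSet α 𝒜 := by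
  classical
  induction s using Finset.induction with
  | empty => simpa using smashSet_zero
  | @insert j s hj ih =>
    rw [Finset.sum_insert hj]
    exact smashSet_add (hg j (Finset.mem_insert_self j s))
      (ih fun i hi => hg i (Finset.mem_insert_of_mem hi))

lemma smashSet_single {g : G} {x : X} {a : A} (ha : a ∈ 𝒜.comp g)
    (hx : a ≠ 0 → x ∈ α.car (𝒢.s g)) :
    Finsupp.single ((g, x) : G × X) a ∈ smashSet α 𝒜 := by
  intro p
  rcases eq_or_ne p (g, x) with rfl | hp
  · simpa using ⟨ha, hx⟩
  · have h0 : (Finsupp.single ((g, x) : G × X) a) p = 0 :=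
      Finsupp.single_eq_of_ne' (Ne.symm hp)
    rw [h0]
    exact ⟨Submodule.zero_mem _, fun h => absurd rfl h⟩

/-- Decomposition of a finsupp as a finset sum of singles. -/
lemma finsupp_eq_sum_single (f : (G × X) →₀ A) :
    f = ∑ p ∈ f.support, Finsupp.single p (f p) :=
  (Finsupp.sum_single f).symm

/-- Left local units act as identities on homogeneous components. -/
lemma one_mul_comp (hG₀ : 𝒢.Objs.Finite) (one : G → A) (hone : IsIdFamily 𝒜 one)
    {h : G} {b : A} (hb : b ∈ 𝒜.comp h) : one (𝒢.t h) * b = b := by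
  classical
  have h1 : (1 : A) = ∑ e ∈ hG₀.toFinset, one e :=
    hone.2.trans (finsum_mem_eq_finite_toFinset_sum one hG₀)
  have hth : 𝒢.t h ∈ hG₀.toFinset := by
    simp [Set.Finite.mem_toFinset, Gpd.Objs, Gpd.obj, 𝒢.s_t]
  calc one (𝒢.t h) * b
      = ∑ e ∈ hG₀.toFinset, one e * b := by
        refine (Finset.sum_eq_single_of_mem (f := fun e => one e * b) _ hth
          fun e he hne => ?_).symm
        have hobj : 𝒢.obj e := by simpa [Set.Finite.mem_toFinset, Gpd.Objs] using he
        exact 𝒜.mul_eq_zero e h (by rw [hobj]; exact hne) _ ((hone.1 e hobj).1) _ hb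
    _ = (∑ e ∈ hG₀.toFinset, one e) * b := by rw [Finset.sum_mul]
    _ = b := by rw [← h1, one_mul]

/-- Right local units act as identities on homogeneous components. -/
lemma mul_one_comp (hG₀ : 𝒢.Objs.Finite) (one : G → A) (hone : IsIdFamily 𝒜 one)
    {h : G} {b : A} (hb : b ∈ 𝒜.comp h) : b * one (𝒢.s h) = b := by
  classical
  have h1 : (1 : A) = ∑ e ∈ hG₀.toFinset, one e :=
    hone.2.trans (finsum_mem_eq_finite_toFinset_sum one hG₀)
  have hsh : 𝒢.s h ∈ hG₀.toFinset := by
    simp [Set.Finite.mem_toFinset, Gpd.Objs, Gpd.obj, 𝒢.s_s]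
  calc b * one (𝒢.s h)
      = ∑ e ∈ hG₀.toFinset, b * one e := by
        refine (Finset.sum_eq_single_of_mem (f := fun e => b * one e) _ hsh
          fun e he hne => ?_).symm
        have hobj : 𝒢.obj e := by simpa [Set.Finite.mem_toFinset, Gpd.Objs] using he
        refine 𝒜.mul_eq_zero h e ?_ _ hb _ ((hone.1 e hobj).1)
        rw [Gpd.t_obj hobj]; exact fun hh => hne hh.symm
    _ = b * ∑ e ∈ hG₀.toFinset, one e := by rw [Finset.mul_sum]
    _ = b := by rw [← h1, mul_one]

/-- Associativity for products of singles; the third factor must be supported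
compatibly with the action. -/
lemma smashMul_single_assoc (p q r : G × X) (a b c : A)
    (hr : c ≠ 0 → r.2 ∈ α.car (𝒢.s r.1)) :
    smashMul α (smashMul α (Finsupp.single p a) (Finsupp.single q b)) (Finsupp.single r c) =
    smashMul α (Finsupp.single p a) (smashMul α (Finsupp.single q b) (Finsupp.single r c)) := by
  rcases eq_or_ne c 0 with rfl | hc
  · rw [Finsupp.single_zero, smashMul_zero_right, smashMul_zero_right, smashMul_zero_right]
  have hr2 : r.2 ∈ α.car (𝒢.inv r.1) := by
    rw [α.car_t (𝒢.inv r.1), 𝒢.t_inv]; exact hr hc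
  rw [smashMul_single_single, smashMul_single_single]
  by_cases h1 : 𝒢.s p.1 = 𝒢.t q.1 ∧ α.act q.1 q.2 = p.2
  · rw [if_pos h1, smashMul_single_single]
    by_cases h2 : 𝒢.s q.1 = 𝒢.t r.1 ∧ α.act r.1 r.2 = q.2
    · rw [if_pos h2, smashMul_single_single]
      have e1 : 𝒢.s (𝒢.mul p.1 q.1) = 𝒢.s q.1 := 𝒢.s_mul _ _ h1.1
      have e2 : 𝒢.t (𝒢.mul q.1 r.1) = 𝒢.t q.1 := 𝒢.t_mul _ _ h2.1
      have e3 : α.act (𝒢.mul q.1 r.1) r.2 = α.act q.1 q.2 := by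
        rw [← α.act_mul q.1 r.1 h2.1 r.2 hr2, h2.2]
      rw [if_pos ⟨e1.trans h2.1, h2.2⟩, if_pos ⟨h1.1.trans e2.symm, e3.trans h1.2⟩]
      simp only [𝒢.mul_assoc p.1 q.1 r.1 h1.1 h2.1, mul_assoc]
    · rw [if_neg h2, smashMul_zero_right, if_neg]
      intro hcon
      have e1 : 𝒢.s (𝒢.mul p.1 q.1) = 𝒢.s q.1 := 𝒢.s_mul _ _ h1.1
      exact h2 ⟨e1 ▸ hcon.1, hcon.2⟩
  · rw [if_neg h1, smashMul_zero_left]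
    by_cases h2 : 𝒢.s q.1 = 𝒢.t r.1 ∧ α.act r.1 r.2 = q.2
    · rw [if_pos h2, smashMul_single_single, if_neg]
      intro hcon
      have e2 : 𝒢.t (𝒢.mul q.1 r.1) = 𝒢.t q.1 := 𝒢.t_mul _ _ h2.1
      have e3 : α.act (𝒢.mul q.1 r.1) r.2 = α.act q.1 q.2 := by
        rw [← α.act_mul q.1 r.1 h2.1 r.2 hr2, h2.2]
      exact h1 ⟨hcon.1.trans e2, e3.symm.trans hcon.2⟩
    · rw [if_neg h2, smashMul_zero_right]

end Aux2

section Aux3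

variable {G : Type u} {𝒢 : Gpd G} {X : Type v} {k : Type*} {A : Type w}
  [Field k] [Ring A] [Algebra k A] [Finite X]
variable {α : GpdSetAction 𝒢 X} {𝒜 : GpdGrading 𝒢 k A}

lemma smashOne_eq (hG₀ : 𝒢.Objs.Finite) (one : G → A) :
    smashOne α one = ∑ e ∈ hG₀.toFinset, ∑ x ∈ (Set.toFinite (α.car e)).toFinset,
      Finsupp.single ((e, x) : G × X) (one e) := by
  unfold smashOne
  rw [finsum_mem_eq_finite_toFinset_sum _ hG₀]
  refine Finset.sum_congr rfl fun e _ => ?_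
  rw [finsum_mem_eq_finite_toFinset_sum _ (Set.toFinite _)]

lemma smashOne_mem (hG₀ : 𝒢.Objs.Finite) (one : G → A) (hone : IsIdFamily 𝒜 one) :
    smashOne α one ∈ smashSet α 𝒜 := by
  rw [smashOne_eq hG₀]
  refine smashSet_sum _ _ fun e he => smashSet_sum _ _ fun x hx => ?_
  have hobj : 𝒢.obj e := by simpa [Set.Finite.mem_toFinset, Gpd.Objs] using he
  refine smashSet_single ((hone.1 e hobj).1) fun _ => ?_
  rw [hobj]
  simpa [Set.Finite.mem_toFinset] using hx

lemma smashMul_single_one_left (hG₀ : 𝒢.Objs.Finite) (one : G → A) (hone : IsIdFamily 𝒜 one)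
    {e : G} (he : 𝒢.obj e) (x : X) {f : (G × X) →₀ A} (hf : f ∈ smashSet α 𝒜) :
    smashMul α (Finsupp.single ((e, x) : G × X) (one e)) f =
      f.sum fun q b => if e = 𝒢.t q.1 ∧ α.act q.1 q.2 = x
        then Finsupp.single q b else 0 := by
  unfold smashMul
  rw [Finsupp.sum_single_index (by simp)]
  apply Finsupp.sum_congr; intro q hq
  have hse : 𝒢.s ((e, x) : G × X).1 = e := he
  by_cases h : e = 𝒢.t q.1 ∧ α.act q.1 q.2 = x
  · rw [if_pos ⟨hse.trans h.1, h.2⟩, if_pos h]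
    have h1 : 𝒢.mul e q.1 = q.1 := by rw [h.1]; exact 𝒢.tgt_mul q.1
    have h2 : one e * f q = f q := by
      rw [h.1]; exact one_mul_comp hG₀ one hone (hf q).1
    rw [h1, h2]
  · rw [if_neg, if_neg h]
    exact fun hc => h ⟨hse.symm.trans hc.1, hc.2⟩

lemma smashMul_single_one_right (hG₀ : 𝒢.Objs.Finite) (one : G → A) (hone : IsIdFamily 𝒜 one)
    {e : G} (he : 𝒢.obj e) {x : X} (hx : x ∈ α.car e) {f : (G × X) →₀ A}
    (hf : f ∈ smashSet α 𝒜) :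
    smashMul α f (Finsupp.single ((e, x) : G × X) (one e)) =
      f.sum fun p a => if 𝒢.s p.1 = e ∧ x = p.2 then Finsupp.single p a else 0 := by
  unfold smashMul
  apply Finsupp.sum_congr; intro p hp
  rw [Finsupp.sum_single_index (by simp)]
  have hte : 𝒢.t e = e := Gpd.t_obj he
  have hax : α.act e x = x := α.act_id e he x hx
  by_cases h : 𝒢.s p.1 = e ∧ x = p.2
  · rw [if_pos ⟨h.1.trans hte.symm, hax.trans h.2⟩, if_pos h]
    have h1 : 𝒢.mul p.1 e = p.1 := by
      conv_lhs => rw [← h.1]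
      exact 𝒢.mul_src p.1
    have h2 : f p * one e = f p := by
      rw [← h.1]; exact mul_one_comp hG₀ one hone (hf p).1
    rw [h1, h2, show ((p.1, ((e, x) : G × X).2) : G × X) = p from by rw [show ((e, x) : G × X).2 = x from rfl, h.2]]
  · rw [if_neg, if_neg h]
    exact fun hc => h ⟨hc.1.trans hte, hax.symm.trans hc.2⟩

lemma smashMul_one_left (hG₀ : 𝒢.Objs.Finite) (one : G → A) (hone : IsIdFamily 𝒜 one)
    {f : (G × X) →₀ A} (hf : f ∈ smashSet α 𝒜) :
    smashMul α (smashOne α one) f = f := by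
  classical
  rw [smashOne_eq hG₀, smashMul_sum_left]
  calc (∑ e ∈ hG₀.toFinset, smashMul α (∑ x ∈ (Set.toFinite (α.car e)).toFinset,
          Finsupp.single ((e, x) : G × X) (one e)) f)
      = ∑ e ∈ hG₀.toFinset, ∑ q ∈ f.support, ∑ x ∈ (Set.toFinite (α.car e)).toFinset,
          (if e = 𝒢.t q.1 ∧ α.act q.1 q.2 = x then Finsupp.single q (f q) else 0) := by
        refine Finset.sum_congr rfl fun e he => ?_
        have hobj : 𝒢.obj e := by simpa [Set.Finite.mem_toFinset, Gpd.Objs] using he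
        rw [smashMul_sum_left,
          Finset.sum_congr rfl fun x _ => smashMul_single_one_left hG₀ one hone hobj x hf]
        simp only [Finsupp.sum]
        exact Finset.sum_comm
    _ = ∑ q ∈ f.support, ∑ e ∈ hG₀.toFinset, ∑ x ∈ (Set.toFinite (α.car e)).toFinset,
          (if e = 𝒢.t q.1 ∧ α.act q.1 q.2 = x then Finsupp.single q (f q) else 0) :=
        Finset.sum_comm
    _ = ∑ q ∈ f.support, Finsupp.single q (f q) := by
        refine Finset.sum_congr rfl fun q hq => ?_
        have hq0 : f q ≠ 0 := Finsupp.mem_support_iff.1 hq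
        have hcar : α.act q.1 q.2 ∈ α.car (𝒢.t q.1) := by
          rw [← α.car_t q.1]
          refine (α.bijOn q.1).1 ?_
          rw [α.car_t (𝒢.inv q.1), 𝒢.t_inv]
          exact (hf q).2 hq0
        have hobjt : 𝒢.t q.1 ∈ hG₀.toFinset := by
          simp [Set.Finite.mem_toFinset, Gpd.Objs, Gpd.obj, 𝒢.s_t]
        have inner : ∀ e, (∑ x ∈ (Set.toFinite (α.car e)).toFinset,
            if e = 𝒢.t q.1 ∧ α.act q.1 q.2 = x then Finsupp.single q (f q) else 0)
            = if e = 𝒢.t q.1 then (if α.act q.1 q.2 ∈ (Set.toFinite (α.car e)).toFinset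
                then Finsupp.single q (f q) else 0) else 0 := by
          intro e
          by_cases he : e = 𝒢.t q.1
          · simp only [he, true_and, if_true]
            exact Finset.sum_ite_eq _ _ _
          · simp [he]
        rw [Finset.sum_congr rfl fun e _ => inner e, Finset.sum_ite_eq', if_pos hobjt,
          if_pos ((Set.toFinite _).mem_toFinset.2 hcar)]
    _ = f := Finsupp.sum_single f

lemma smashMul_one_right (hG₀ : 𝒢.Objs.Finite) (one : G → A) (hone : IsIdFamily 𝒜 one)
    {f : (G × X) →₀ A} (hf : f ∈ smashSet α 𝒜) :
    smashMul α f (smashOne α one) = f := by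
  classical
  rw [smashOne_eq hG₀, smashMul_sum_right]
  calc (∑ e ∈ hG₀.toFinset, smashMul α f (∑ x ∈ (Set.toFinite (α.car e)).toFinset,
          Finsupp.single ((e, x) : G × X) (one e)))
      = ∑ e ∈ hG₀.toFinset, ∑ p ∈ f.support, ∑ x ∈ (Set.toFinite (α.car e)).toFinset,
          (if 𝒢.s p.1 = e ∧ x = p.2 then Finsupp.single p (f p) else 0) := by
        refine Finset.sum_congr rfl fun e he => ?_
        have hobj : 𝒢.obj e := by simpa [Set.Finite.mem_toFinset, Gpd.Objs] using he
        rw [smashMul_sum_right,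
          Finset.sum_congr rfl fun x hx => smashMul_single_one_right hG₀ one hone hobj
            ((Set.toFinite _).mem_toFinset.1 hx) hf]
        simp only [Finsupp.sum]
        exact Finset.sum_comm
    _ = ∑ p ∈ f.support, ∑ e ∈ hG₀.toFinset, ∑ x ∈ (Set.toFinite (α.car e)).toFinset,
          (if 𝒢.s p.1 = e ∧ x = p.2 then Finsupp.single p (f p) else 0) :=
        Finset.sum_comm
    _ = ∑ p ∈ f.support, Finsupp.single p (f p) := by
        refine Finset.sum_congr rfl fun p hp => ?_
        have hp0 : f p ≠ 0 := Finsupp.mem_support_iff.1 hp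
        have hcar : p.2 ∈ α.car (𝒢.s p.1) := (hf p).2 hp0
        have hobjs : 𝒢.s p.1 ∈ hG₀.toFinset := by
          simp [Set.Finite.mem_toFinset, Gpd.Objs, Gpd.obj, 𝒢.s_s]
        have inner : ∀ e, (∑ x ∈ (Set.toFinite (α.car e)).toFinset,
            if 𝒢.s p.1 = e ∧ x = p.2 then Finsupp.single p (f p) else 0)
            = if 𝒢.s p.1 = e then (if p.2 ∈ (Set.toFinite (α.car e)).toFinset
                then Finsupp.single p (f p) else 0) else 0 := by
          intro e
          by_cases he : 𝒢.s p.1 = e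
          · simp only [he, true_and, if_true]
            exact Finset.sum_ite_eq' _ _ _
          · simp [he]
        rw [Finset.sum_congr rfl fun e _ => inner e, Finset.sum_ite_eq, if_pos hobjs,
          if_pos ((Set.toFinite _).mem_toFinset.2 hcar)]
    _ = f := Finsupp.sum_single f

end Aux3

section Aux4

variable {G : Type u} {𝒢 : Gpd G} {X : Type v} {k : Type*} {A : Type w}
  [Field k] [Ring A] [Algebra k A]
variable {α : GpdSetAction 𝒢 X} {𝒜 : GpdGrading 𝒢 k A}

set_option maxHeartbeats 1000000 in
lemma smashMul_mem {f₁ f₂ : (G × X) →₀ A} (hf₁ : f₁ ∈ smashSet α 𝒜)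
    (hf₂ : f₂ ∈ smashSet α 𝒜) : smashMul α f₁ f₂ ∈ smashSet α 𝒜 := by
  classical
  have hrw : smashMul α f₁ f₂ = ∑ p ∈ f₁.support, ∑ q ∈ f₂.support,
      (if 𝒢.s p.1 = 𝒢.t q.1 ∧ α.act q.1 q.2 = p.2
        then Finsupp.single ((𝒢.mul p.1 q.1, q.2) : G × X) (f₁ p * f₂ q) else 0) := rfl
  rw [hrw]
  refine smashSet_sum _ _ fun p hp => smashSet_sum _ _ fun q hq => ?_
  by_cases h : 𝒢.s p.1 = 𝒢.t q.1 ∧ α.act q.1 q.2 = p.2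
  · rw [if_pos h]
    refine smashSet_single (𝒜.mul_mem _ _ h.1 _ (hf₁ p).1 _ (hf₂ q).1) fun _ => ?_
    rw [𝒢.s_mul _ _ h.1]
    exact (hf₂ q).2 (Finsupp.mem_support_iff.1 hq)
  · rw [if_neg h]; exact smashSet_zero

set_option maxHeartbeats 1000000 in
lemma smashMul_assoc_of_mem {f₁ f₂ f₃ : (G × X) →₀ A} (hf₃ : f₃ ∈ smashSet α 𝒜) :
    smashMul α (smashMul α f₁ f₂) f₃ = smashMul α f₁ (smashMul α f₂ f₃) := by
  classical
  have hmm : ∀ (s₁ s₂ : Finset (G × X)) (g₁ g₂ : (G × X) → (G × X) →₀ A),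
      smashMul α (∑ i ∈ s₁, g₁ i) (∑ j ∈ s₂, g₂ j)
        = ∑ i ∈ s₁, ∑ j ∈ s₂, smashMul α (g₁ i) (g₂ j) := by
    intro s₁ s₂ g₁ g₂
    rw [smashMul_sum_left]
    exact Finset.sum_congr rfl fun i _ => smashMul_sum_right α s₂ g₂ (g₁ i)
  have L : smashMul α (smashMul α f₁ f₂) f₃ =
      ∑ p ∈ f₁.support, ∑ q ∈ f₂.support, ∑ r ∈ f₃.support,
        smashMul α (smashMul α (Finsupp.single p (f₁ p)) (Finsupp.single q (f₂ q)))
          (Finsupp.single r (f₃ r)) := by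
    conv_lhs => rw [finsupp_eq_sum_single f₁, finsupp_eq_sum_single f₂,
      finsupp_eq_sum_single f₃]
    rw [hmm, smashMul_sum_left]
    refine Finset.sum_congr rfl fun p _ => ?_
    rw [smashMul_sum_left]
    refine Finset.sum_congr rfl fun q _ => ?_
    rw [smashMul_sum_right]
  have R : smashMul α f₁ (smashMul α f₂ f₃) =
      ∑ p ∈ f₁.support, ∑ q ∈ f₂.support, ∑ r ∈ f₃.support,
        smashMul α (Finsupp.single p (f₁ p))
          (smashMul α (Finsupp.single q (f₂ q)) (Finsupp.single r (f₃ r))) := by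
    conv_lhs => rw [finsupp_eq_sum_single f₁, finsupp_eq_sum_single f₂,
      finsupp_eq_sum_single f₃]
    rw [hmm, smashMul_sum_left]
    refine Finset.sum_congr rfl fun p _ => ?_
    rw [smashMul_sum_right]
    refine Finset.sum_congr rfl fun q _ => ?_
    rw [smashMul_sum_right]
  rw [L, R]
  refine Finset.sum_congr rfl fun p _ => Finset.sum_congr rfl fun q _ =>
    Finset.sum_congr rfl fun r hr => ?_
  exact smashMul_single_assoc p q r _ _ _
    fun _ => (hf₃ r).2 (Finsupp.mem_support_iff.1 hr)

end Aux4

/-- The smash product `A #_α^𝒢 X` of a unital `𝒢`-graded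
algebra `A` with a finite split `𝒢`-set `X` (where `𝒢₀` is finite) is an
associative unital algebra with identity `Σ_{e ∈ 𝒢₀} Σ_{x ∈ X_e} 1_e δ_x`,
and the elements `1_e δ_x` (`e ∈ 𝒢₀`, `x ∈ X_e`) are pairwise orthogonal
idempotents. -/
theorem smash_product_is_unital_algebra
    {G : Type u} (𝒢 : Gpd G) {X : Type v} (k : Type*) (A : Type w)
    [Field k] [Ring A] [Algebra k A] [Finite X]
    (hG₀ : 𝒢.Objs.Finite)
    (𝒜 : GpdGrading 𝒢 k A) (α : GpdSetAction 𝒢 X) (hsplit : α.Split)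
    (one : G → A) (hone : IsIdFamily 𝒜 one) :
    -- the smash product is closed under its multiplication
    (∀ f₁ ∈ smashSet α 𝒜, ∀ f₂ ∈ smashSet α 𝒜, smashMul α f₁ f₂ ∈ smashSet α 𝒜) ∧
    -- associativity
    (∀ f₁ ∈ smashSet α 𝒜, ∀ f₂ ∈ smashSet α 𝒜, ∀ f₃ ∈ smashSet α 𝒜,
      smashMul α (smashMul α f₁ f₂) f₃ = smashMul α f₁ (smashMul α f₂ f₃)) ∧
    -- the multiplication is k-bilinear
    (∀ f₁ ∈ smashSet α 𝒜, ∀ f₂ ∈ smashSet α 𝒜, ∀ f₃ ∈ smashSet α 𝒜,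
      smashMul α (f₁ + f₂) f₃ = smashMul α f₁ f₃ + smashMul α f₂ f₃ ∧
      smashMul α f₃ (f₁ + f₂) = smashMul α f₃ f₁ + smashMul α f₃ f₂) ∧
    (∀ (c : k), ∀ f₁ ∈ smashSet α 𝒜, ∀ f₂ ∈ smashSet α 𝒜,
      smashMul α (c • f₁) f₂ = c • smashMul α f₁ f₂ ∧
      smashMul α f₁ (c • f₂) = c • smashMul α f₁ f₂) ∧
    -- `Σ_{e ∈ 𝒢₀} Σ_{x ∈ X_e} 1_e δ_x` is the identity element
    (smashOne α one ∈ smashSet α 𝒜 ∧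
      ∀ f ∈ smashSet α 𝒜, smashMul α (smashOne α one) f = f ∧
        smashMul α f (smashOne α one) = f) ∧
    -- the `1_e δ_x` are idempotents
    (∀ e x, 𝒢.obj e → x ∈ α.car e →
      smashMul α (Finsupp.single ((e, x) : G × X) (one e))
        (Finsupp.single ((e, x) : G × X) (one e))
        = Finsupp.single ((e, x) : G × X) (one e)) ∧
    -- pairwise orthogonality
    (∀ e x e' x', 𝒢.obj e → x ∈ α.car e → 𝒢.obj e' → x' ∈ α.car e' →
      ((e, x) : G × X) ≠ (e', x') →
      smashMul α (Finsupp.single ((e, x) : G × X) (one e))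
        (Finsupp.single ((e', x') : G × X) (one e')) = 0) := by
  classical
  refine ⟨fun f₁ hf₁ f₂ hf₂ => smashMul_mem hf₁ hf₂,
      fun f₁ _ f₂ _ f₃ hf₃ => smashMul_assoc_of_mem hf₃,
      fun f₁ _ f₂ _ f₃ _ => ⟨smashMul_add_left α f₁ f₂ f₃, smashMul_add_right α f₃ f₁ f₂⟩,
      fun c f₁ _ f₂ _ => ⟨smashMul_smul_left α c f₁ f₂, smashMul_smul_right α c f₁ f₂⟩,
      ⟨smashOne_mem hG₀ one hone,
        fun f hf => ⟨smashMul_one_left hG₀ one hone hf, smashMul_one_right hG₀ one hone hf⟩⟩,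
      ?_, ?_⟩
  · -- idempotents
    intro e x he hx
    have hte : 𝒢.t e = e := Gpd.t_obj he
    have hax : α.act e x = x := α.act_id e he x hx
    rw [smashMul_single_single,
      if_pos ⟨(show 𝒢.s e = e from he).trans hte.symm, hax⟩]
    have hmul : 𝒢.mul e e = e := by
      have h := 𝒢.mul_src e
      rw [he] at h
      exact h
    have h1 : one e * one e = one e := ((hone.1 e he).2 (one e) (hone.1 e he).1).1
    rw [hmul, h1]
  · -- orthogonality
    intro e x e' x' he hx he' hx' hne
    rw [smashMul_single_single, if_neg]
    intro hc
    have h1 : e = e' := by rw [← he, hc.1, Gpd.t_obj he']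
    have h2 : x = x' := by
      rw [show x = α.act e' x' from hc.2.symm, α.act_id e' he' x' hx']
    exact hne (by rw [h1, h2])

end
end

section
/- Let 𝒢 and 𝒦 be groupoids and X a (𝒢_α,𝒦_β)-set via α=(X_g,α_g)_{g∈𝒢} and β=(Y_k,β_k)_{k∈𝒦} such that X is a split 𝒦-set. Then the set O^𝒦 of 𝒦-orbits of X is a 𝒢-set via λ=(O_g^𝒦, λ_g)_{g∈𝒢}, where O_g^𝒦 = {o(x) : x ∈ X_g} and λ_g(o(x)) = o(α_g(x)) for o(x) ∈ O_{g⁻¹}^𝒦 (in particular λ_g is well defined), and the map φ : X → O^𝒦, φ(x) = o(x), is a surjective morphism of 𝒢-sets. -/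
open scoped Classical

noncomputable section

universe u v w

/-- `X` is a `(𝒢_α, 𝒦_β)`-set:  each `Y_k` is `α`-invariant, each `X_g` is
`β`-invariant, and the two actions commute. -/
structure GKCompat {G : Type u} {K : Type*} {𝒢 : Gpd G} {𝒦 : Gpd K} {X : Type v}
    (α : GpdSetAction 𝒢 X) (β : GpdSetAction 𝒦 X) : Prop where
  alpha_inv : ∀ g κ, α.act g '' (α.car (𝒢.inv g) ∩ β.car κ) ⊆ α.car g ∩ β.car κ
  beta_inv : ∀ g κ, β.act κ '' (α.car g ∩ β.car (𝒦.inv κ)) ⊆ α.car g ∩ β.car κ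
  comm : ∀ g κ x, x ∈ α.car (𝒢.inv g) ∩ β.car (𝒦.inv κ) →
    α.act g (β.act κ x) = β.act κ (α.act g x)

/-- The ideal `E_k = A #^𝒢_{θ^k} Y_k = ⊕_g ⊕_{x ∈ Y_k ∩ X_{d(g)}} A_g δ_x`
of the smash product `A #_α^𝒢 X`. -/
def Eset {G : Type u} {K : Type*} {𝒢 : Gpd G} {𝒦 : Gpd K} {X : Type v}
    {k : Type*} {A : Type w} [Field k] [Ring A] [Algebra k A]
    (α : GpdSetAction 𝒢 X) (β : GpdSetAction 𝒦 X) (𝒜 : GpdGrading 𝒢 k A)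
    (κ : K) : Set ((G × X) →₀ A) :=
  {f | f ∈ smashSet α 𝒜 ∧ ∀ p : G × X, f p ≠ 0 → p.2 ∈ β.car κ}

/-- The map `γ_k : E_{k⁻¹} → E_k`, `γ_k(a_g δ_y) = a_g δ_{β_k(y)}`. -/
noncomputable def gammaAct {G : Type u} {K : Type*} {𝒦 : Gpd K} {X : Type v} {A : Type w}
    [Ring A] (β : GpdSetAction 𝒦 X) (κ : K) (f : (G × X) →₀ A) : (G × X) →₀ A :=
  f.sum fun p a =>
    if p.2 ∈ β.car (𝒦.inv κ) then Finsupp.single ((p.1, β.act κ p.2) : G × X) a else 0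

/-- The identity element `𝟏_k = Σ_{e ∈ 𝒢₀} Σ_{x ∈ Y_k ∩ X_e} 1_e δ_x` of `E_k`. -/
noncomputable def OneE {G : Type u} {K : Type*} {𝒢 : Gpd G} {𝒦 : Gpd K} {X : Type v}
    {A : Type w} [Ring A]
    (α : GpdSetAction 𝒢 X) (β : GpdSetAction 𝒦 X) (one : G → A) (κ : K) : (G × X) →₀ A :=
  ∑ᶠ e ∈ 𝒢.Objs, ∑ᶠ x ∈ (β.car κ ∩ α.car e), Finsupp.single ((e, x) : G × X) (one e)

/-- The `𝒦`-orbit `o(x) = {β_k(x) : k ∈ D_p}` of `x ∈ Y_p`. -/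
def orbit {K : Type*} {𝒦 : Gpd K} {X : Type v} (β : GpdSetAction 𝒦 X) (x : X) : Set X :=
  {y | ∃ κ, x ∈ β.car (𝒦.inv κ) ∧ β.act κ x = y}

/-- The set `O^𝒦` of `𝒦`-orbits of `X`. -/
abbrev OrbT {K : Type*} {𝒦 : Gpd K} {X : Type v} (β : GpdSetAction 𝒦 X) : Type v :=
  {o : Set X // ∃ x, orbit β x = o}

/-- The orbit map `φ : X → O^𝒦`, `φ(x) = o(x)`. -/
def orbMap {K : Type*} {𝒦 : Gpd K} {X : Type v} (β : GpdSetAction 𝒦 X) (x : X) : OrbT β :=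
  ⟨orbit β x, ⟨x, rfl⟩⟩

/-- The monomorphism `φ* : A #_λ^𝒢 O^𝒦 → A #_α^𝒢 X` induced by the orbit map,
`φ*(a_g δ_{o(x)}) = Σ_{y ∈ X_{d(g)}, o(y) = o(x)} a_g δ_y`. -/
noncomputable def phiStar {G : Type u} {K : Type*} {𝒢 : Gpd G} {𝒦 : Gpd K} {X : Type v}
    {A : Type w} [Ring A] (α : GpdSetAction 𝒢 X) (β : GpdSetAction 𝒦 X)
    (f : (G × OrbT β) →₀ A) : (G × X) →₀ A :=
  f.sum fun p a =>
    ∑ᶠ y ∈ {y | y ∈ α.car (𝒢.s p.1) ∧ orbit β y = (p.2 : Set X)},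
      Finsupp.single ((p.1, y) : G × X) a

section Aux

variable {G : Type u} {K : Type*} {𝒢 : Gpd G} {𝒦 : Gpd K} {X : Type v}

lemma Gpd.obj_s (𝒢 : Gpd G) (g : G) : 𝒢.obj (𝒢.s g) := 𝒢.s_s g

lemma Gpd.obj_t (𝒢 : Gpd G) (g : G) : 𝒢.obj (𝒢.t g) := 𝒢.s_t g

lemma Gpd.inv_inv (𝒢 : Gpd G) (g : G) : 𝒢.inv (𝒢.inv g) = g := by
  have h1 : 𝒢.inv (𝒢.inv g) = 𝒢.mul (𝒢.inv (𝒢.inv g)) (𝒢.mul (𝒢.inv g) g) := by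
    rw [𝒢.inv_mul]
    conv_lhs => rw [← 𝒢.mul_src (𝒢.inv (𝒢.inv g))]
    rw [𝒢.s_inv, 𝒢.t_inv]
  rw [h1, ← 𝒢.mul_assoc _ _ _ (by rw [𝒢.s_inv]) (by rw [𝒢.s_inv]), 𝒢.inv_mul, 𝒢.s_inv,
    𝒢.tgt_mul]

lemma Gpd.inv_obj (𝒢 : Gpd G) {e : G} (he : 𝒢.obj e) : 𝒢.inv e = e := by
  have h1 : 𝒢.t e = e := by
    conv_lhs => rw [← he]
    rw [𝒢.t_s, he]
  have := 𝒢.mul_src (𝒢.inv e)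
  rw [𝒢.s_inv, h1] at this
  rw [← this, 𝒢.inv_mul, he]

lemma GpdSetAction.car_inv (β : GpdSetAction 𝒦 X) (κ : K) :
    β.car (𝒦.inv κ) = β.car (𝒦.s κ) := by
  rw [β.car_t (𝒦.inv κ), 𝒦.t_inv]

lemma GpdSetAction.act_inv_act (α : GpdSetAction 𝒢 X) (g : G) {x : X}
    (hx : x ∈ α.car (𝒢.inv g)) : α.act (𝒢.inv g) (α.act g x) = x := by
  rw [α.act_mul (𝒢.inv g) g (by rw [𝒢.s_inv]) x hx, 𝒢.inv_mul]
  exact α.act_id _ (𝒢.obj_s g) x (by rwa [α.car_inv] at hx)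

lemma GpdSetAction.act_act_inv (α : GpdSetAction 𝒢 X) (g : G) {x : X}
    (hx : x ∈ α.car g) : α.act g (α.act (𝒢.inv g) x) = x := by
  have := α.act_inv_act (𝒢.inv g) (x := x) (by rwa [𝒢.inv_inv])
  rwa [𝒢.inv_inv] at this

lemma mem_orbit_self {β : GpdSetAction 𝒦 X} (hsplit : β.Split) (x : X) :
    x ∈ orbit β x := by
  obtain ⟨e, ⟨he, hx⟩, -⟩ := hsplit x
  exact ⟨e, by rwa [𝒦.inv_obj he], β.act_id e he x hx⟩

lemma orbit_symm {β : GpdSetAction 𝒦 X} {x y : X} (h : y ∈ orbit β x) :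
    x ∈ orbit β y := by
  obtain ⟨κ, hx, rfl⟩ := h
  refine ⟨𝒦.inv κ, ?_, β.act_inv_act κ hx⟩
  rw [𝒦.inv_inv]
  exact (β.bijOn κ).mapsTo hx

lemma orbit_trans {β : GpdSetAction 𝒦 X} (hsplit : β.Split) {x y z : X}
    (h1 : y ∈ orbit β x) (h2 : z ∈ orbit β y) : z ∈ orbit β x := by
  obtain ⟨κ, hx, rfl⟩ := h1
  obtain ⟨μ, hy, rfl⟩ := h2
  have hyt : β.act κ x ∈ β.car (𝒦.t κ) := by
    rw [← β.car_t]; exact (β.bijOn κ).mapsTo hx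
  have hys : β.act κ x ∈ β.car (𝒦.s μ) := by rwa [β.car_inv] at hy
  obtain ⟨e, -, hu⟩ := hsplit (β.act κ x)
  have hst : 𝒦.s μ = 𝒦.t κ := by
    rw [hu _ ⟨𝒦.obj_s μ, hys⟩, hu _ ⟨𝒦.obj_t κ, hyt⟩]
  refine ⟨𝒦.mul μ κ, ?_, ?_⟩
  · rw [β.car_inv, 𝒦.s_mul μ κ hst, ← β.car_inv]; exact hx
  · rw [← β.act_mul μ κ hst x hx]

lemma orbit_eq_of_mem {β : GpdSetAction 𝒦 X} (hsplit : β.Split) {x y : X}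
    (h : y ∈ orbit β x) : orbit β x = orbit β y := by
  ext z
  exact ⟨fun hz => orbit_trans hsplit (orbit_symm h) hz, fun hz => orbit_trans hsplit h hz⟩

lemma orbit_act_congr {α : GpdSetAction 𝒢 X} {β : GpdSetAction 𝒦 X}
    (hc : GKCompat α β) (hsplit : β.Split) {g : G} {x y : X}
    (hx : x ∈ α.car (𝒢.inv g)) (hy : y ∈ α.car (𝒢.inv g))
    (h : orbit β x = orbit β y) : orbit β (α.act g x) = orbit β (α.act g y) := by
  have hyx : y ∈ orbit β x := h ▸ mem_orbit_self hsplit y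
  obtain ⟨κ, hxκ, rfl⟩ := hyx
  have hmem : α.act g x ∈ α.car g ∩ β.car (𝒦.inv κ) :=
    hc.alpha_inv g (𝒦.inv κ) ⟨x, ⟨hx, hxκ⟩, rfl⟩
  have hcomm := hc.comm g κ x ⟨hx, hxκ⟩
  exact orbit_eq_of_mem hsplit ⟨κ, hmem.2, (hcomm ▸ rfl)⟩

/-- The action map on orbits: `λ_g(o(x)) = o(α_g(x))`. -/
noncomputable def lamAct (α : GpdSetAction 𝒢 X) (β : GpdSetAction 𝒦 X) (g : G)
    (o : OrbT β) : OrbT β :=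
  if h : ∃ x, x ∈ α.car (𝒢.inv g) ∧ orbit β x = (o : Set X)
  then orbMap β (α.act g h.choose) else o

lemma lamAct_spec {α : GpdSetAction 𝒢 X} {β : GpdSetAction 𝒦 X}
    (hc : GKCompat α β) (hsplit : β.Split) (g : G) {x : X}
    (hx : x ∈ α.car (𝒢.inv g)) :
    lamAct α β g (orbMap β x) = orbMap β (α.act g x) := by
  have h : ∃ y, y ∈ α.car (𝒢.inv g) ∧ orbit β y = ((orbMap β x : OrbT β) : Set X) :=
    ⟨x, hx, rfl⟩
  rw [lamAct, dif_pos h]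
  exact Subtype.ext (orbit_act_congr hc hsplit h.choose_spec.1 hx h.choose_spec.2)

end Aux

/-- If `X` is a `(𝒢_α, 𝒦_β)`-set which is split as a
`𝒦`-set, then the orbit set `O^𝒦` is a `𝒢`-set via
`λ = (O_g^𝒦, λ_g)` with `O_g^𝒦 = {o(x) : x ∈ X_g}` and
`λ_g(o(x)) = o(α_g(x))` (in particular `λ_g` is well defined), and the orbit
map `φ : X → O^𝒦` is a surjective morphism of `𝒢`-sets. -/
theorem orbit_set_is_G_set
    {G : Type u} {K : Type*} (𝒢 : Gpd G) (𝒦 : Gpd K) {X : Type v}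
    (α : GpdSetAction 𝒢 X) (β : GpdSetAction 𝒦 X)
    (hc : GKCompat α β) (hsplitβ : β.Split) :
    ∃ lam : GpdSetAction 𝒢 (OrbT β),
      -- `O_g^𝒦 = {o(x) : x ∈ X_g}`
      (∀ g, lam.car g = {o : OrbT β | ∃ x ∈ α.car g, orbit β x = (o : Set X)}) ∧
      -- `λ_g(o(x)) = o(α_g(x))`, which is well defined
      (∀ g, ∀ x ∈ α.car (𝒢.inv g), lam.act g (orbMap β x) = orbMap β (α.act g x)) ∧
      -- the orbit map is a surjective morphism of `𝒢`-sets
      Function.Surjective (orbMap β) ∧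
      (∀ g, ∀ x ∈ α.car g, orbMap β x ∈ lam.car g) ∧
      (∀ g, ∀ x ∈ α.car (𝒢.inv g), orbMap β (α.act g x) = lam.act g (orbMap β x)) := by
  classical
  -- basic facts
  have key := fun (g : G) {x : X} (hx : x ∈ α.car (𝒢.inv g)) =>
    lamAct_spec hc hsplitβ g hx
  refine ⟨{
    car := fun g => {o : OrbT β | ∃ x ∈ α.car g, orbit β x = (o : Set X)}
    act := lamAct α β
    car_t := by
      intro g
      exact congrArg (fun s => {o : OrbT β | ∃ x ∈ s, orbit β x = (o : Set X)}) (α.car_t g)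
    bijOn := ?_
    act_id := ?_
    act_mul := ?_ }, fun g => rfl, fun g x hx => key g hx,
    fun o => ⟨o.2.choose, Subtype.ext o.2.choose_spec⟩,
    fun g x hx => ⟨x, hx, rfl⟩, fun g x hx => (key g hx).symm⟩
  · -- bijOn
    intro g
    refine ⟨?_, ?_, ?_⟩
    · rintro o ⟨x, hx, ho⟩
      have : o = orbMap β x := Subtype.ext ho.symm
      subst this
      rw [key g hx]
      exact ⟨α.act g x, (α.bijOn g).mapsTo hx, rfl⟩
    · rintro o₁ ⟨x₁, hx₁, ho₁⟩ o₂ ⟨x₂, hx₂, ho₂⟩ heq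
      have e₁ : o₁ = orbMap β x₁ := Subtype.ext ho₁.symm
      have e₂ : o₂ = orbMap β x₂ := Subtype.ext ho₂.symm
      subst e₁; subst e₂
      rw [key g hx₁, key g hx₂] at heq
      have hgx₁ : α.act g x₁ ∈ α.car (𝒢.inv (𝒢.inv g)) := by
        rw [𝒢.inv_inv]; exact (α.bijOn g).mapsTo hx₁
      have hgx₂ : α.act g x₂ ∈ α.car (𝒢.inv (𝒢.inv g)) := by
        rw [𝒢.inv_inv]; exact (α.bijOn g).mapsTo hx₂
      have := orbit_act_congr hc hsplitβ (g := 𝒢.inv g) hgx₁ hgx₂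
        (congrArg Subtype.val heq)
      rw [α.act_inv_act g hx₁, α.act_inv_act g hx₂] at this
      exact Subtype.ext this
    · rintro o ⟨x, hx, ho⟩
      have hxinv : α.act (𝒢.inv g) x ∈ α.car (𝒢.inv g) :=
        (α.bijOn (𝒢.inv g)).mapsTo (by rwa [𝒢.inv_inv])
      refine ⟨orbMap β (α.act (𝒢.inv g) x), ⟨α.act (𝒢.inv g) x, hxinv, rfl⟩, ?_⟩
      rw [key g hxinv, α.act_act_inv g hx]
      exact Subtype.ext ho
  · -- act_id
    rintro e he o ⟨x, hx, ho⟩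
    have hxe : x ∈ α.car (𝒢.inv e) := by rw [𝒢.inv_obj he]; exact hx
    have : o = orbMap β x := Subtype.ext ho.symm
    subst this
    rw [key e hxe, α.act_id e he x hx]
  · -- act_mul
    rintro g h hgh o ⟨x, hx, ho⟩
    have : o = orbMap β x := Subtype.ext ho.symm
    subst this
    have hcar : α.car (𝒢.inv h) = α.car (𝒢.inv (𝒢.mul g h)) := by
      rw [α.car_inv, α.car_inv, 𝒢.s_mul g h hgh]
    have hx' : x ∈ α.car (𝒢.inv (𝒢.mul g h)) := hcar ▸ hx
    have hhx : α.act h x ∈ α.car (𝒢.inv g) := by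
      rw [α.car_inv, hgh, ← α.car_t]
      exact (α.bijOn h).mapsTo hx
    rw [key h hx, key g hhx, key (𝒢.mul g h) hx', α.act_mul g h hgh x hx]

end
end
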